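/- Let F be a field, let α, β be nonzero elements of F, and let s, t be positive integers. Then the minimal polynomial of the Kronecker product J_s(α) ⊗ J_t(β) is (X − αβ)^{s ∧ t}. -/

import Mathlib

open Polynomial Matrix
open scoped Kronecker

open scoped Classical in
/-- For positive integers `s`, `t`, `wedge F s t` is the largest value of `i + j + 1` over
pairs `0 ≤ i ≤ s-1`, `0 ≤ j ≤ t-1` such that the binomial coefficient `C(i+j, i)`, viewed
as an element of `F`, is nonzero; moreover `wedge F s 0 = wedge F 0 t = 0`. -/
noncomputable def wedge (F : Type*) [Field F] (s t : ℕ) : ℕ :=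
  ((Finset.range s) ×ˢ (Finset.range t)).sup
    (fun p => if (((p.1 + p.2).choose p.1 : F)) ≠ 0 then p.1 + p.2 + 1 else 0)

/-- `jordan F s a` is the `s × s` Jordan block with eigenvalue `a`:
the entry `(i, j)` is `a` if `j = i`, `1` if `j = i + 1`, and `0` otherwise. -/
def jordan (F : Type*) [Field F] (s : ℕ) (a : F) : Matrix (Fin s) (Fin s) F :=
  Matrix.of fun i j => if (j : ℕ) = (i : ℕ) then a else if (j : ℕ) = (i : ℕ) + 1 then 1 else 0

open scoped Classical in
lemma le_wedge {F : Type*} [Field F] {s t i j : ℕ} (hi : i < s) (hj : j < t)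
    (hC : (((i + j).choose i : F)) ≠ 0) : i + j + 1 ≤ wedge F s t := by
  have hmem : (i, j) ∈ (Finset.range s ×ˢ Finset.range t) := by
    simp [Finset.mem_product, hi, hj]
  unfold wedge
  refine le_trans (le_of_eq ?_) (Finset.le_sup hmem)
  simp [hC]

open scoped Classical in
lemma wedge_spec {F : Type*} [Field F] {s t : ℕ} (hs : 0 < s) (ht : 0 < t) :
    ∃ i j, i < s ∧ j < t ∧ (((i + j).choose i : F)) ≠ 0 ∧ i + j + 1 = wedge F s t := by
  have h1 : 1 ≤ wedge F s t := by
    have := le_wedge (F := F) hs ht (by simp)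
    omega
  have hne : ((Finset.range s) ×ˢ (Finset.range t)).Nonempty := by
    refine ⟨(0, 0), ?_⟩
    simp [Finset.mem_product, hs, ht]
  obtain ⟨p, hp, hsup⟩ := Finset.exists_mem_eq_sup ((Finset.range s) ×ˢ (Finset.range t)) hne
    (fun p : ℕ × ℕ => if (((p.1 + p.2).choose p.1 : F)) ≠ 0 then p.1 + p.2 + 1 else 0)
  have hval : wedge F s t
      = if (((p.1 + p.2).choose p.1 : F)) ≠ 0 then p.1 + p.2 + 1 else 0 := by
    unfold wedge
    exact hsup
  rw [Finset.mem_product, Finset.mem_range, Finset.mem_range] at hp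
  by_cases hC : (((p.1 + p.2).choose p.1 : F)) ≠ 0
  · exact ⟨p.1, p.2, hp.1, hp.2, hC, by rw [hval, if_pos hC]⟩
  · rw [hval, if_neg hC] at h1
    omega

lemma jordan_zero_pow {F : Type*} [Field F] {s : ℕ} (m : ℕ) (i j : Fin s) :
    ((jordan F s 0) ^ m) i j = if (j : ℕ) = (i : ℕ) + m then 1 else 0 := by
  induction m generalizing j with
  | zero =>
    rw [pow_zero, Matrix.one_apply]
    by_cases h : i = j
    · subst h; simp
    · rw [if_neg h, if_neg (by simp only [Fin.ext_iff] at h; omega)]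
  | succ m ih =>
    rw [pow_succ, Matrix.mul_apply]
    by_cases h : (i : ℕ) + m < s
    · obtain ⟨k0, hk0⟩ : ∃ k0 : Fin s, (k0 : ℕ) = (i : ℕ) + m := ⟨⟨_, h⟩, rfl⟩
      rw [Finset.sum_eq_single k0]
      · rw [ih, if_pos hk0, one_mul, jordan]
        simp only [Matrix.of_apply, hk0]
        split_ifs <;> first | rfl | omega
      · intro b _ hb
        rw [ih, if_neg (by rw [← hk0]; exact fun hc => hb (Fin.val_injective hc)), zero_mul]
      · exact fun hmem => absurd (Finset.mem_univ _) hmem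
    · have hj := j.isLt
      rw [if_neg (by omega)]
      apply Finset.sum_eq_zero
      intro b _
      rw [ih, if_neg (by have := b.isLt; omega), zero_mul]

lemma jordan_split (F : Type*) [Field F] (s : ℕ) (a : F) :
    jordan F s a = a • (1 : Matrix (Fin s) (Fin s) F) + jordan F s 0 := by
  ext i j
  simp only [jordan, Matrix.of_apply, Matrix.add_apply, Matrix.smul_apply, Matrix.one_apply,
    smul_eq_mul, Fin.ext_iff]
  split_ifs <;> first | omega | ring

/-- Let `F` be a field, `α`, `β` nonzero elements of `F`, and `s`, `t` positive integers.
Then the minimal polynomial of `J_s(α) ⊗ J_t(β)` is `(X − αβ) ^ (s ∧ t)`. -/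
theorem minpoly_jordan_kronecker (F : Type*) [Field F] (α β : F) (hα : α ≠ 0) (hβ : β ≠ 0)
    (s t : ℕ) (hs : 0 < s) (ht : 0 < t) :
    minpoly F (jordan F s α ⊗ₖ jordan F t β) = (X - C (α * β)) ^ wedge F s t := by
  classical
  set n1 : Matrix (Fin s) (Fin s) F := jordan F s 0 with hn1def
  set n2 : Matrix (Fin t) (Fin t) F := jordan F t 0 with hn2def
  set U : Matrix (Fin s × Fin t) (Fin s × Fin t) F := n1 ⊗ₖ (1 : Matrix (Fin t) (Fin t) F)
    with hUdef
  set V : Matrix (Fin s × Fin t) (Fin s × Fin t) F := (1 : Matrix (Fin s) (Fin s) F) ⊗ₖ n2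
    with hVdef
  set M : Matrix (Fin s × Fin t) (Fin s × Fin t) F := β • U + α • V + U * V with hMdef
  set K : Matrix (Fin s × Fin t) (Fin s × Fin t) F := jordan F s α ⊗ₖ jordan F t β with hKdef
  set w : ℕ := wedge F s t with hwdef
  -- basic powers of U and V
  have hUpow : ∀ p : ℕ, U ^ p = (n1 ^ p) ⊗ₖ (1 : Matrix (Fin t) (Fin t) F) := by
    intro p
    induction p with
    | zero => simp [Matrix.one_kronecker_one]
    | succ p ih => rw [pow_succ, ih, hUdef, ← Matrix.mul_kronecker_mul, ← pow_succ, one_mul]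
  have hVpow : ∀ q : ℕ, V ^ q = (1 : Matrix (Fin s) (Fin s) F) ⊗ₖ (n2 ^ q) := by
    intro q
    induction q with
    | zero => simp [Matrix.one_kronecker_one]
    | succ q ih => rw [pow_succ, ih, hVdef, ← Matrix.mul_kronecker_mul, ← pow_succ, one_mul]
  have hUVp : ∀ p q : ℕ, U ^ p * V ^ q = (n1 ^ p) ⊗ₖ (n2 ^ q) := by
    intro p q
    rw [hUpow, hVpow, ← Matrix.mul_kronecker_mul, mul_one, one_mul]
  have hUVc : Commute U V := by
    show U * V = V * U
    have h1 := hUVp 1 1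
    simp only [pow_one] at h1
    rw [h1, hVdef, hUdef, ← Matrix.mul_kronecker_mul, mul_one, one_mul]
  have hswap : ∀ p q r u : ℕ, (U ^ p * V ^ q) * (U ^ r * V ^ u) = U ^ (p + r) * V ^ (q + u) := by
    intro p q r u
    rw [hUVp p q, hUVp r u, hUVp (p + r) (q + u), ← Matrix.mul_kronecker_mul, ← pow_add,
      ← pow_add]
  -- the cast of a natural number into matrices is a scalar
  have hcast : ∀ c : ℕ, ((c : ℕ) : Matrix (Fin s × Fin t) (Fin s × Fin t) F) = (c : F) • 1 := by
    intro c
    rw [← map_natCast (algebraMap F (Matrix (Fin s × Fin t) (Fin s × Fin t) F)) c,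
      Algebra.algebraMap_eq_smul_one]
  -- expansion of powers of M
  have hMpow : ∀ m : ℕ, M ^ m = ∑ k ∈ Finset.range (m + 1), ∑ a ∈ Finset.range (k + 1),
      (((m.choose k * k.choose a : ℕ) : F) * (β ^ a * α ^ (k - a))) •
        ((n1 ^ (a + (m - k))) ⊗ₖ (n2 ^ (m - a))) := by
    intro m
    have hcUUV : Commute U (U * V) := (Commute.refl U).mul_right hUVc
    have hcVUV : Commute V (U * V) := hUVc.symm.mul_right (Commute.refl V)
    have hc2 : Commute (β • U + α • V) (U * V) :=
      Commute.add_left (hcUUV.smul_left β) (hcVUV.smul_left α)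
    have hc3 : Commute (β • U) (α • V) := (hUVc.smul_left β).smul_right α
    rw [hMdef, Commute.add_pow hc2 m]
    refine Finset.sum_congr rfl fun k hk => ?_
    rw [Finset.mem_range] at hk
    have hk' : k ≤ m := by omega
    rw [Commute.add_pow hc3 k, Finset.sum_mul, Finset.sum_mul]
    refine Finset.sum_congr rfl fun a ha => ?_
    rw [Finset.mem_range] at ha
    have ha' : a ≤ k := by omega
    have hmid : (k - a) + (m - k) = m - a := by omega
    rw [_root_.smul_pow, _root_.smul_pow, hUVc.mul_pow, hcast (k.choose a), hcast (m.choose k)]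
    simp only [smul_mul_assoc, mul_smul_comm, mul_one, smul_smul]
    rw [hswap, hmid, hUVp]
    congr 1
    push_cast
    ring
  -- nilpotency bounds for n1 and n2
  have hn1z : ∀ p : ℕ, s ≤ p → n1 ^ p = 0 := by
    intro p hp
    ext i j
    have hj := j.isLt
    rw [hn1def, jordan_zero_pow, if_neg (by omega)]
    simp
  have hn2z : ∀ q : ℕ, t ≤ q → n2 ^ q = 0 := by
    intro q hq
    ext i j
    have hj := j.isLt
    rw [hn2def, jordan_zero_pow, if_neg (by omega)]
    simp
  -- M ^ w = 0
  have hMw : M ^ w = 0 := by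
    rw [hMpow]
    refine Finset.sum_eq_zero fun k hk => Finset.sum_eq_zero fun a ha => ?_
    rw [Finset.mem_range] at hk ha
    have hk' : k ≤ w := by omega
    have ha' : a ≤ k := by omega
    by_cases h1 : s ≤ a + (w - k)
    · rw [hn1z _ h1, Matrix.zero_kronecker, smul_zero]
    · by_cases h2 : t ≤ w - a
      · rw [hn2z _ h2, Matrix.kronecker_zero, smul_zero]
      · have hCz : ((w.choose a : ℕ) : F) = 0 := by
          by_contra hC
          have hle : a + (w - a) + 1 ≤ w := by
            refine le_wedge (by omega) (by omega) ?_
            rwa [show a + (w - a) = w by omega]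
          omega
        have hz : ((w.choose k * k.choose a : ℕ) : F) = 0 := by
          rw [Nat.choose_mul ha']
          push_cast
          rw [hCz, zero_mul]
        rw [hz, zero_mul, zero_smul]
  -- w ≥ 1 and M ^ (w - 1) ≠ 0
  obtain ⟨i0, j0, hi0, hj0, hC0, hsum⟩ := wedge_spec (F := F) hs ht
  rw [← hwdef] at hsum
  have hw1 : 1 ≤ w := by omega
  set m : ℕ := w - 1 with hmdef
  have hm : i0 + j0 = m := by omega
  obtain ⟨z1, hz1⟩ : ∃ z : Fin s, (z : ℕ) = 0 := ⟨⟨0, hs⟩, rfl⟩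
  obtain ⟨z2, hz2⟩ : ∃ z : Fin t, (z : ℕ) = 0 := ⟨⟨0, ht⟩, rfl⟩
  obtain ⟨p1, hp1⟩ : ∃ z : Fin s, (z : ℕ) = i0 := ⟨⟨i0, hi0⟩, rfl⟩
  obtain ⟨p2, hp2⟩ : ∃ z : Fin t, (z : ℕ) = j0 := ⟨⟨j0, hj0⟩, rfl⟩
  have hMne : M ^ m ≠ 0 := by
    intro h0
    have hE : (M ^ m) (z1, z2) (p1, p2)
        = ((m.choose m * m.choose i0 : ℕ) : F) * (β ^ i0 * α ^ (m - i0)) := by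
      rw [hMpow, Matrix.sum_apply]
      rw [Finset.sum_eq_single_of_mem m (Finset.self_mem_range_succ m)]
      · rw [Matrix.sum_apply]
        rw [Finset.sum_eq_single_of_mem i0 (by rw [Finset.mem_range]; omega)]
        · rw [Matrix.smul_apply, Matrix.kroneckerMap_apply, jordan_zero_pow, jordan_zero_pow,
            hz1, hz2, hp1, hp2, if_pos (by omega), if_pos (by omega)]
          simp
        · intro a ha hne
          rw [Finset.mem_range] at ha
          rw [Matrix.smul_apply, Matrix.kroneckerMap_apply, jordan_zero_pow, jordan_zero_pow,
            hz1, hz2, hp1, hp2, if_neg (by omega), zero_mul, smul_zero]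
      · intro k hk hne
        rw [Finset.mem_range] at hk
        rw [Matrix.sum_apply]
        refine Finset.sum_eq_zero fun a ha => ?_
        rw [Finset.mem_range] at ha
        rw [Matrix.smul_apply, Matrix.kroneckerMap_apply, jordan_zero_pow, jordan_zero_pow,
          hz1, hz2, hp1, hp2]
        by_cases hA : i0 = 0 + (a + (m - k))
        · rw [if_pos hA, if_neg (by omega), mul_zero, smul_zero]
        · rw [if_neg hA, zero_mul, smul_zero]
    rw [h0, Matrix.zero_apply] at hE
    have hnz : ((m.choose m * m.choose i0 : ℕ) : F) * (β ^ i0 * α ^ (m - i0)) ≠ 0 := by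
      apply mul_ne_zero
      · rw [Nat.choose_self, one_mul]
        rw [show m.choose i0 = (i0 + j0).choose i0 by rw [hm]]
        exact hC0
      · exact mul_ne_zero (pow_ne_zero _ hβ) (pow_ne_zero _ hα)
    exact hnz hE.symm
  -- relate K and M
  have hsplit : K = algebraMap F (Matrix (Fin s × Fin t) (Fin s × Fin t) F) (α * β) + M := by
    rw [hKdef, hMdef, hUdef, hVdef, hn1def, hn2def, jordan_split F s α, jordan_split F t β]
    rw [show (jordan F s 0) ⊗ₖ (1 : Matrix (Fin t) (Fin t) F) *
        ((1 : Matrix (Fin s) (Fin s) F) ⊗ₖ jordan F t 0)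
        = (jordan F s 0) ⊗ₖ (jordan F t 0) by
      rw [← Matrix.mul_kronecker_mul, mul_one, one_mul]]
    simp only [Matrix.add_kronecker, Matrix.kronecker_add, Matrix.smul_kronecker,
      Matrix.kronecker_smul, Matrix.one_kronecker_one, smul_smul, smul_add]
    rw [Algebra.algebraMap_eq_smul_one]
    module
  have hMK : ∀ d : ℕ, aeval K ((X - C (α * β)) ^ d) = M ^ d := by
    intro d
    rw [map_pow, map_sub, aeval_X, aeval_C, hsplit]
    congr 1
    rw [add_sub_cancel_left]
  -- conclude via the minimal polynomial
  have hdvd : minpoly F K ∣ (X - C (α * β)) ^ w := by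
    apply minpoly.dvd
    rw [hMK]
    exact hMw
  obtain ⟨d, hdw, hass⟩ := (dvd_prime_pow (Polynomial.prime_X_sub_C (α * β)) w).mp hdvd
  have hint : IsIntegral F K := IsIntegral.of_finite F K
  have heq : minpoly F K = (X - C (α * β)) ^ d :=
    Polynomial.eq_of_monic_of_associated (minpoly.monic hint) ((monic_X_sub_C _).pow d) hass
  rw [heq]
  congr 1
  by_contra hne'
  have hd : d ≤ m := by omega
  have hzero : M ^ m = 0 := by
    have h0 : M ^ d = 0 := by
      rw [← hMK, ← heq]
      exact minpoly.aeval F K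
    calc M ^ m = M ^ d * M ^ (m - d) := by rw [← pow_add]; congr 1; omega
    _ = 0 := by rw [h0, zero_mul]
  exact hMne hzero
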